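/- Let B be a simple Bratteli diagram with full group G=G_B and path space X=X_B. For any clopen sets A,C⊆X with A∪C≠X, the subgroup G°(A∩C) is generated by G°(A) and G°(C), i.e., G°(A∩C)=⟨G°(A),G°(C)⟩. -/

import Mathlib

open MeasureTheory Filter
open scoped ENNReal ComplexOrder

noncomputable section

/-- A Bratteli diagram: vertex levels `V i`, edge levels `E i` (edges from `V i` to `V (i+1)`),
all levels finite and nonempty, a single root vertex, and source/range maps that are
surjective (every vertex emits and receives an edge). -/
structure BratteliDiagram where
  V : ℕ → Type
  E : ℕ → Type
  fintypeV : ∀ i, Fintype (V i)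
  fintypeE : ∀ i, Fintype (E i)
  nonemptyV : ∀ i, Nonempty (V i)
  nonemptyE : ∀ i, Nonempty (E i)
  subsingleton_root : Subsingleton (V 0)
  src : ∀ i, E i → V i
  rng : ∀ i, E i → V (i + 1)
  src_surj : ∀ i, Function.Surjective (src i)
  rng_surj : ∀ i, Function.Surjective (rng i)

namespace BratteliDiagram

variable (B : BratteliDiagram)

/-- The path space `X_B`: infinite paths starting at the root. -/
def Path : Type :=
  { x : ∀ i, B.E i // ∀ i, B.rng i (x i) = B.src (i + 1) (x (i + 1)) }

instance (i : ℕ) : UniformSpace (B.E i) := ⊥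

instance instUniformSpacePath : UniformSpace B.Path :=
  inferInstanceAs (UniformSpace { x : ∀ i, B.E i // ∀ i, B.rng i (x i) = B.src (i + 1) (x (i + 1)) })

instance instMeasurableSpacePath : MeasurableSpace B.Path := borel _

/-- Finite segments of `L+1` consecutive edges starting at level `n`. -/
def Seg (n L : ℕ) : Type :=
  { f : ∀ i : Fin (L + 1), B.E (n + (i : ℕ)) //
    ∀ (i : ℕ) (hi : i < L),
      B.rng (n + i) (f ⟨i, by omega⟩) = B.src (n + (i + 1)) (f ⟨i + 1, by omega⟩) }

/-- The number of finite paths connecting `v ∈ V n` to `w ∈ V (n + L + 1)`. -/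
def numPaths (n L : ℕ) (v : B.V n) (w : B.V (n + L + 1)) : ℕ :=
  Nat.card { f : B.Seg n L //
    B.src n (f.1 ⟨0, by omega⟩) = v ∧ B.rng (n + L) (f.1 ⟨L, by omega⟩) = w }

/-- A Bratteli diagram is simple if every vertex of a given level is connected
to every vertex of some deeper level. -/
def IsSimple : Prop :=
  ∀ n : ℕ, ∃ L : ℕ, ∀ (v : B.V n) (w : B.V (n + L + 1)), 0 < B.numPaths n L v w

/-- A Bratteli diagram is even if every vertex of a given level is connected to every
vertex of some deeper level by a (positive) even number of paths. -/
def IsEven : Prop :=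
  ∀ n : ℕ, ∃ L : ℕ, ∀ (v : B.V n) (w : B.V (n + L + 1)),
    0 < B.numPaths n L v w ∧ Even (B.numPaths n L v w)

/-- A permutation of the path space "of level `n`": it changes only the first `n` edges,
and what it does to the first `n` edges depends only on the first `n` edges. -/
def IsLevel (n : ℕ) (g : Equiv.Perm B.Path) : Prop :=
  (∀ (x : B.Path) (i : ℕ), n ≤ i → (g x).1 i = x.1 i) ∧
  (∀ x y : B.Path, (∀ i : ℕ, i < n → x.1 i = y.1 i) → ∀ i : ℕ, i < n → (g x).1 i = (g y).1 i)

theorem isLevel_one (n : ℕ) : B.IsLevel n 1 :=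
  ⟨fun _ _ _ => rfl, fun _ _ h i hi => h i hi⟩

theorem IsLevel.mul {n : ℕ} {a b : Equiv.Perm B.Path} (ha : B.IsLevel n a)
    (hb : B.IsLevel n b) : B.IsLevel n (a * b) := by
  constructor
  · intro x i hi
    have h1 := ha.1 (b x) i hi
    have h2 := hb.1 x i hi
    simpa [Equiv.Perm.mul_apply] using h1.trans h2
  · intro x y hxy i hi
    have h2 := hb.2 x y hxy
    have := ha.2 (b x) (b y) h2 i hi
    simpa [Equiv.Perm.mul_apply] using this

theorem IsLevel.mono {n m : ℕ} (hnm : n ≤ m) {g : Equiv.Perm B.Path}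
    (h : B.IsLevel n g) : B.IsLevel m g := by
  refine ⟨fun x i hi => h.1 x i (hnm.trans hi), fun x y hxy i hi => ?_⟩
  rcases lt_or_ge i n with h' | h'
  · exact h.2 x y (fun j hj => hxy j (hj.trans_le hnm)) i h'
  · rw [h.1 x i h', h.1 y i h']
    exact hxy i hi

/-- The group `G_n` of homeomorphisms of the path space permuting only the
first `n` edges of infinite paths. -/
def level (n : ℕ) : Subgroup (Equiv.Perm B.Path) where
  carrier := { g | B.IsLevel n g ∧ B.IsLevel n g⁻¹ }
  one_mem' := ⟨B.isLevel_one n, by simpa using B.isLevel_one n⟩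
  mul_mem' := by
    intro a b ha hb
    exact ⟨ha.1.mul B hb.1, by rw [mul_inv_rev]; exact IsLevel.mul B hb.2 ha.2⟩
  inv_mem' := by
    intro a ha
    exact ⟨ha.2, by simpa using ha.1⟩

theorem level_mono {n m : ℕ} (h : n ≤ m) : B.level n ≤ B.level m := by
  intro g hg
  exact ⟨hg.1.mono B h, hg.2.mono B h⟩

/-- The full group `G_B = ⋃ n, G_n` of the Bratteli diagram. -/
def fullGroup : Subgroup (Equiv.Perm B.Path) where
  carrier := { g | ∃ n, g ∈ B.level n }
  one_mem' := ⟨0, one_mem _⟩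
  mul_mem' := by
    rintro a b ⟨n, ha⟩ ⟨m, hb⟩
    exact ⟨max n m, mul_mem (B.level_mono (le_max_left n m) ha)
      (B.level_mono (le_max_right n m) hb)⟩
  inv_mem' := by
    rintro a ⟨n, ha⟩
    exact ⟨n, inv_mem ha⟩

/-- `G_n` viewed as a subgroup of the full group. -/
def levelIn (n : ℕ) : Subgroup ↥B.fullGroup := (B.level n).comap B.fullGroup.subtype

/-- The subgroup `G°(A)` of elements of the full group fixing `A` pointwise. -/
def Gcirc (A : Set B.Path) : Subgroup ↥B.fullGroup :=
  ⨅ x ∈ A, MulAction.stabilizer ↥B.fullGroup x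

/-- `G°_n(A) = G_n ∩ G°(A)`. -/
def GcircN (n : ℕ) (A : Set B.Path) : Subgroup ↥B.fullGroup :=
  B.levelIn n ⊓ B.Gcirc A

end BratteliDiagram

/-- Conjugation of a subgroup: `g • H = gHg⁻¹`. -/
def conjSub {Γ : Type*} [Group Γ] (g : Γ) (H : Subgroup Γ) : Subgroup Γ :=
  Subgroup.map (MulAut.conj g).toMonoidHom H

/-- The Borel structure on the space `Sub(Γ)` of subgroups of `Γ`,
induced from the product space `{0,1}^Γ` (equivalently `Set Γ`). -/
instance subgroupMeasurableSpace {Γ : Type*} [Group Γ] : MeasurableSpace (Subgroup Γ) :=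
  MeasurableSpace.comap (fun H => (H : Set Γ)) inferInstance

namespace BratteliDiagram

variable (B : BratteliDiagram)

/-- `F(A)`: the collection of subgroups of the full group normalized by `G°(A)`. -/
def FF (A : Set B.Path) : Set (Subgroup ↥B.fullGroup) :=
  { H | ∀ g ∈ B.Gcirc A, conjSub g H = H }

end BratteliDiagram

/-- A measure `ν` on `Y` is invariant under the action of `G`. -/
def MeasInv (G : Type*) [Group G] {Y : Type*} [MeasurableSpace Y] [MulAction G Y]
    (ν : Measure Y) : Prop :=
  ∀ (g : G) (s : Set Y), MeasurableSet s → ν ((fun y => g • y) ⁻¹' s) = ν s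

/-- The action of `G` on `(Y, ν)` is ergodic: every invariant measurable set is null or conull. -/
def MeasErg (G : Type*) [Group G] {Y : Type*} [MeasurableSpace Y] [MulAction G Y]
    (ν : Measure Y) : Prop :=
  ∀ s : Set Y, MeasurableSet s → (∀ g : G, (fun y => g • y) ⁻¹' s = s) → ν s = 0 ∨ ν s = 1

/-- An invariant random subgroup: a conjugation-invariant Borel probability measure on `Sub(G)`. -/
def IsIRS (G : Type*) [Group G] (φ : Measure (Subgroup G)) : Prop :=
  IsProbabilityMeasure φ ∧
    ∀ (g : G) (s : Set (Subgroup G)), MeasurableSet s → φ (conjSub g ⁻¹' s) = φ s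

/-- An ergodic invariant random subgroup. -/
def IsErgodicIRS (G : Type*) [Group G] (φ : Measure (Subgroup G)) : Prop :=
  IsIRS G φ ∧
    ∀ s : Set (Subgroup G), MeasurableSet s → (∀ g : G, conjSub g ⁻¹' s = s) →
      φ s = 0 ∨ φ s = 1

/-- A character of a group: normalized, central, positive semidefinite complex function. -/
def IsCharacter (G : Type*) [Group G] (χ : G → ℂ) : Prop :=
  χ 1 = 1 ∧ (∀ a b : G, χ (a * b) = χ (b * a)) ∧
    ∀ (n : ℕ) (g : Fin n → G) (c : Fin n → ℂ),
      0 ≤ ∑ i, ∑ j, (starRingEnd ℂ) (c i) * c j * χ (g i * (g j)⁻¹)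

namespace BratteliDiagram

variable (B : BratteliDiagram)

/-- The product measure `μ_α = μ_1^{α_1} × ⋯ × μ_k^{α_k}` on `X^{|α|}`,
realized on the index type `Σ i : Fin k, Fin (α i)` (of cardinality `|α| = Σ α i`). -/
def prodMeasure {k : ℕ} (μ : Fin k → Measure B.Path) (α : Fin k → ℕ) :
    Measure ((Σ i : Fin k, Fin (α i)) → B.Path) :=
  Measure.pi fun p => μ p.1

/-- The stabilizer distribution `φ_α` of the diagonal action of the full group
on `(X^{|α|}, μ_α)`. -/
def stabDist {k : ℕ} (μ : Fin k → Measure B.Path) (α : Fin k → ℕ) :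
    Measure (Subgroup ↥B.fullGroup) :=
  Measure.map (fun y => MulAction.stabilizer ↥B.fullGroup y) (B.prodMeasure μ α)

end BratteliDiagram


namespace BratteliDiagram
variable (B : BratteliDiagram)

instance (i : ℕ) : Fintype (B.E i) := B.fintypeE i
instance (i : ℕ) : Fintype (B.V i) := B.fintypeV i
instance (i : ℕ) : Nonempty (B.E i) := B.nonemptyE i
instance : Subsingleton (B.V 0) := B.subsingleton_root
instance (i : ℕ) : DiscreteTopology (B.E i) := ⟨rfl⟩

theorem continuous_coord (i : ℕ) : Continuous fun x : B.Path => x.1 i :=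
  (continuous_apply i).comp continuous_subtype_val

instance : CompactSpace B.Path := by
  have hclosed : IsClosed {x : ∀ i, B.E i | ∀ i, B.rng i (x i) = B.src (i + 1) (x (i + 1))} := by
    have : {x : ∀ i, B.E i | ∀ i, B.rng i (x i) = B.src (i + 1) (x (i + 1))} =
        ⋂ i, (fun x : ∀ j, B.E j => (x i, x (i + 1))) ⁻¹'
          {p : B.E i × B.E (i + 1) | B.rng i p.1 = B.src (i + 1) p.2} := by
      ext x; simp [Set.mem_iInter]
    rw [this]
    exact isClosed_iInter fun i =>
      (isClosed_discrete _).preimage ((continuous_apply i).prodMk (continuous_apply (i + 1)))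
  exact isCompact_iff_compactSpace.mp hclosed.isCompact

/-- `A` is a union of level-`N` cylinders. -/
def IsCylUnion (N : ℕ) (A : Set B.Path) : Prop :=
  ∀ x ∈ A, ∀ y : B.Path, (∀ i < N, y.1 i = x.1 i) → y ∈ A

theorem IsCylUnion.mono {N M : ℕ} (h : N ≤ M) {A : Set B.Path} (hA : B.IsCylUnion N A) :
    B.IsCylUnion M A := fun x hx y hy => hA x hx y fun i hi => hy i (hi.trans_le h)

theorem isOpen_cyl (N : ℕ) (x : B.Path) : IsOpen {y : B.Path | ∀ i < N, y.1 i = x.1 i} := by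
  have : {y : B.Path | ∀ i < N, y.1 i = x.1 i} =
      ⋂ i ∈ Finset.range N, (fun y : B.Path => y.1 i) ⁻¹' {x.1 i} := by
    ext y; simp [Set.mem_iInter, Finset.mem_range]
  rw [this]
  exact isOpen_biInter_finset fun i _ =>
    (isOpen_discrete _).preimage (B.continuous_coord i)

theorem exists_cyl_subset {U : Set B.Path} (hU : IsOpen U) {x : B.Path} (hx : x ∈ U) :
    ∃ N : ℕ, {y : B.Path | ∀ i < N, y.1 i = x.1 i} ⊆ U := by
  obtain ⟨W, hW, hWU⟩ := isOpen_induced_iff.mp hU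
  have hxW : x.1 ∈ W := by rw [← hWU] at hx; exact hx
  obtain ⟨I, u, hu, hsub⟩ := isOpen_pi_iff.mp hW x.1 hxW
  refine ⟨(I.sup id) + 1, fun y hy => ?_⟩
  have : y.1 ∈ W := by
    apply hsub
    intro i hi
    have hiN : i < I.sup id + 1 := Nat.lt_succ_of_le (Finset.le_sup (f := id) hi)
    rw [hy i hiN]
    exact (hu i hi).2
  rw [← hWU]; exact this

theorem clopen_isCylUnion {A : Set B.Path} (hA : IsClopen A) :
    ∃ N : ℕ, B.IsCylUnion N A := by
  classical
  have hcomp : IsCompact A := hA.1.isCompact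
  choose N hN using fun x : A => B.exists_cyl_subset hA.2 x.2
  obtain ⟨t, ht⟩ := hcomp.elim_finite_subcover
    (fun x : A => {y : B.Path | ∀ i < N x, y.1 i = (x : B.Path).1 i})
    (fun x => B.isOpen_cyl (N x) x)
    (fun x hx => Set.mem_iUnion.mpr ⟨⟨x, hx⟩, fun i _ => rfl⟩)
  refine ⟨t.sup N, fun x hx y hy => ?_⟩
  obtain ⟨x₀, hx₀t, hx₀⟩ := Set.mem_iUnion₂.mp (ht hx)
  apply hN x₀
  intro i hi
  have hiN : i < t.sup N := hi.trans_le (Finset.le_sup hx₀t)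
  rw [hy i hiN]
  exact hx₀ i hi

/-- A chain condition holding below level `N`. -/
def PartialChain (N : ℕ) (q : ∀ i, B.E i) : Prop :=
  ∀ i, i + 1 < N → B.rng i (q i) = B.src (i + 1) (q (i + 1))

/-- Extend a partial path below `N` to an everywhere-defined edge sequence. -/
noncomputable def extChain (N : ℕ) (q : ∀ i, B.E i) : ∀ i, B.E i :=
  Nat.rec (if 0 < N then q 0 else Classical.choice (B.nonemptyE 0))
    (fun i e => if i + 1 < N then q (i + 1) else (B.src_surj (i + 1) (B.rng i e)).choose)

theorem extChain_succ (N : ℕ) (q : ∀ i, B.E i) (i : ℕ) :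
    B.extChain N q (i + 1) = if i + 1 < N then q (i + 1)
      else (B.src_surj (i + 1) (B.rng i (B.extChain N q i))).choose := rfl

theorem extChain_lt (N : ℕ) (q : ∀ i, B.E i) {i : ℕ} (hi : i < N) :
    B.extChain N q i = q i := by
  cases i with
  | zero => simp only [extChain, if_pos hi]; rfl
  | succ j => rw [B.extChain_succ, if_pos hi]

theorem extChain_chain (N : ℕ) (q : ∀ i, B.E i) (hq : B.PartialChain N q) (i : ℕ) :
    B.rng i (B.extChain N q i) = B.src (i + 1) (B.extChain N q (i + 1)) := by
  by_cases h : i + 1 < N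
  · rw [B.extChain_lt N q h, B.extChain_lt N q (Nat.lt_of_succ_lt h)]
    exact hq i h
  · rw [B.extChain_succ, if_neg h]
    exact ((B.src_surj (i + 1) (B.rng i (B.extChain N q i))).choose_spec).symm

/-- Extend a partial path to an infinite path. -/
noncomputable def extPath (N : ℕ) (q : ∀ i, B.E i) (hq : B.PartialChain N q) : B.Path :=
  ⟨B.extChain N q, B.extChain_chain N q hq⟩

theorem extPath_lt (N : ℕ) (q : ∀ i, B.E i) (hq : B.PartialChain N q) {i : ℕ} (hi : i < N) :
    (B.extPath N q hq).1 i = q i := B.extChain_lt N q hi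

/-- Finite prefixes of length `N`. -/
def Pref (N : ℕ) : Type :=
  { p : ∀ i : Fin N, B.E i //
    ∀ (i : ℕ) (h : i + 1 < N),
      B.rng i (p ⟨i, Nat.lt_of_succ_lt h⟩) = B.src (i + 1) (p ⟨i + 1, h⟩) }

instance (N : ℕ) : Finite (B.Pref N) :=
  Subtype.finite

noncomputable instance (N : ℕ) : DecidableEq (B.Pref N) := Classical.decEq _

noncomputable def prefFun {N : ℕ} (p : B.Pref N) : ∀ i, B.E i := fun i =>
  if h : i < N then p.1 ⟨i, h⟩ else Classical.choice (B.nonemptyE i)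

theorem prefFun_chain {N : ℕ} (p : B.Pref N) : B.PartialChain N (B.prefFun p) := by
  intro i h
  have h1 : i < N := Nat.lt_of_succ_lt h
  simp only [prefFun, dif_pos h1, dif_pos h]
  exact p.2 i h

/-- Extension of a prefix to an infinite path. -/
noncomputable def pext {N : ℕ} (p : B.Pref N) : B.Path :=
  B.extPath N (B.prefFun p) (B.prefFun_chain p)

theorem pext_lt {N : ℕ} (p : B.Pref N) {i : ℕ} (hi : i < N) :
    (B.pext p).1 i = p.1 ⟨i, hi⟩ := by
  rw [pext, B.extPath_lt N _ _ hi, prefFun, dif_pos hi]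

/-- The prefix of an infinite path. -/
def prefixOf (N : ℕ) (x : B.Path) : B.Pref N :=
  ⟨fun i => x.1 i, fun i h => x.2 i⟩

theorem prefixOf_pext {N : ℕ} (p : B.Pref N) : B.prefixOf N (B.pext p) = p :=
  Subtype.ext (funext fun i => B.pext_lt p i.2)

theorem prefixOf_eq_of_agree {N : ℕ} {x y : B.Path} (h : ∀ i < N, x.1 i = y.1 i) :
    B.prefixOf N x = B.prefixOf N y :=
  Subtype.ext (funext fun i => h i i.2)

theorem pext_prefixOf_agree {N : ℕ} (x : B.Path) (i : ℕ) (hi : i < N) :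
    (B.pext (B.prefixOf N x)).1 i = x.1 i :=
  B.pext_lt (B.prefixOf N x) hi

/-- The terminal vertex of a prefix. -/
noncomputable def tv {N : ℕ} (p : B.Pref N) : B.V N :=
  B.src N ((B.pext p).1 N)

theorem src_eq_of_agree {N : ℕ} {x y : B.Path} (h : ∀ i < N, x.1 i = y.1 i) :
    B.src N (x.1 N) = B.src N (y.1 N) := by
  cases N with
  | zero => exact Subsingleton.elim _ _
  | succ M =>
    rw [← x.2 M, ← y.2 M, h M (Nat.lt_succ_self M)]

theorem tv_prefixOf {N : ℕ} (x : B.Path) : B.tv (B.prefixOf N x) = B.src N (x.1 N) :=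
  B.src_eq_of_agree fun i hi => B.pext_prefixOf_agree x i hi

theorem tv_pext {N : ℕ} (p : B.Pref N) : B.src N ((B.pext p).1 N) = B.tv p := rfl


/-- `π` preserves terminal vertices of prefixes. -/
def TvPres {N : ℕ} (π : Equiv.Perm (B.Pref N)) : Prop :=
  ∀ p, B.tv (π p) = B.tv p

theorem TvPres.one {N : ℕ} : B.TvPres (N := N) 1 := fun _ => rfl

theorem TvPres.mul {N : ℕ} {π ρ : Equiv.Perm (B.Pref N)} (hπ : B.TvPres π) (hρ : B.TvPres ρ) :
    B.TvPres (π * ρ) := fun p => (hπ (ρ p)).trans (hρ p)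

theorem TvPres.inv {N : ℕ} {π : Equiv.Perm (B.Pref N)} (hπ : B.TvPres π) : B.TvPres π⁻¹ := by
  intro p
  have := hπ (π⁻¹ p)
  rw [Equiv.Perm.eq_inv_iff_eq.mp (rfl : π⁻¹ p = π⁻¹ p)] at this
  exact this.symm

/-- The action of a prefix permutation on infinite paths. -/
noncomputable def permToFun {N : ℕ} (π : Equiv.Perm (B.Pref N)) (hπ : B.TvPres π)
    (x : B.Path) : B.Path := by
  refine ⟨fun i => if h : i < N then (π (B.prefixOf N x)).1 ⟨i, h⟩ else x.1 i, ?_⟩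
  intro i
  dsimp only
  by_cases h2 : i + 1 < N
  · have h1 : i < N := Nat.lt_of_succ_lt h2
    rw [dif_pos h1, dif_pos h2]
    exact (π (B.prefixOf N x)).2 i h2
  · by_cases h1 : i < N
    · have hN : N = i + 1 := by omega
      subst hN
      rw [dif_pos h1, dif_neg h2]
      set q := π (B.prefixOf (i + 1) x) with hq
      have e1 : q.1 ⟨i, h1⟩ = (B.pext q).1 i := (B.pext_lt q h1).symm
      calc B.rng i (q.1 ⟨i, h1⟩) = B.rng i ((B.pext q).1 i) := by rw [e1]
        _ = B.src (i + 1) ((B.pext q).1 (i + 1)) := (B.pext q).2 i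
        _ = B.tv q := B.tv_pext q
        _ = B.tv (B.prefixOf (i + 1) x) := hπ _
        _ = B.src (i + 1) (x.1 (i + 1)) := B.tv_prefixOf x
    · rw [dif_neg h1, dif_neg h2]
      exact x.2 i

theorem permToFun_coord_lt {N : ℕ} (π : Equiv.Perm (B.Pref N)) (hπ : B.TvPres π)
    (x : B.Path) {i : ℕ} (h : i < N) :
    (B.permToFun π hπ x).1 i = (π (B.prefixOf N x)).1 ⟨i, h⟩ := dif_pos h

theorem permToFun_coord_ge {N : ℕ} (π : Equiv.Perm (B.Pref N)) (hπ : B.TvPres π)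
    (x : B.Path) {i : ℕ} (h : ¬ i < N) :
    (B.permToFun π hπ x).1 i = x.1 i := dif_neg h

theorem prefixOf_permToFun {N : ℕ} (π : Equiv.Perm (B.Pref N)) (hπ : B.TvPres π)
    (x : B.Path) : B.prefixOf N (B.permToFun π hπ x) = π (B.prefixOf N x) :=
  Subtype.ext (funext fun i => B.permToFun_coord_lt π hπ x i.2)

theorem permToFun_one {N : ℕ} (h : B.TvPres (N := N) 1) (x : B.Path) :
    B.permToFun 1 h x = x := by
  refine Subtype.ext (funext fun i => ?_)
  by_cases hi : i < N
  · rw [B.permToFun_coord_lt 1 h x hi]; rfl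
  · exact B.permToFun_coord_ge 1 h x hi

theorem permToFun_permToFun {N : ℕ} (π ρ : Equiv.Perm (B.Pref N)) (hπ : B.TvPres π)
    (hρ : B.TvPres ρ) (x : B.Path) :
    B.permToFun π hπ (B.permToFun ρ hρ x) = B.permToFun (π * ρ) (hπ.mul B hρ) x := by
  refine Subtype.ext (funext fun i => ?_)
  by_cases hi : i < N
  · rw [B.permToFun_coord_lt π hπ _ hi, B.permToFun_coord_lt (π * ρ) _ _ hi,
      B.prefixOf_permToFun ρ hρ x]
    rfl
  · rw [B.permToFun_coord_ge π hπ _ hi, B.permToFun_coord_ge ρ hρ _ hi,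
      B.permToFun_coord_ge (π * ρ) _ _ hi]

theorem permToFun_congr {N : ℕ} {π ρ : Equiv.Perm (B.Pref N)} (h : π = ρ) (hπ : B.TvPres π)
    (hρ : B.TvPres ρ) (x : B.Path) : B.permToFun π hπ x = B.permToFun ρ hρ x := by
  subst h; rfl

/-- The path-space permutation induced by a vertex-preserving prefix permutation. -/
noncomputable def permEquiv {N : ℕ} (π : Equiv.Perm (B.Pref N)) (hπ : B.TvPres π) :
    Equiv.Perm B.Path where
  toFun := B.permToFun π hπ
  invFun := B.permToFun π⁻¹ (hπ.inv B)
  left_inv := fun x => by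
    rw [B.permToFun_permToFun π⁻¹ π (hπ.inv B) hπ x,
      B.permToFun_congr (inv_mul_cancel π) _ (TvPres.one B), B.permToFun_one]
  right_inv := fun x => by
    rw [B.permToFun_permToFun π π⁻¹ hπ (hπ.inv B) x,
      B.permToFun_congr (mul_inv_cancel π) _ (TvPres.one B), B.permToFun_one]

theorem permEquiv_apply {N : ℕ} (π : Equiv.Perm (B.Pref N)) (hπ : B.TvPres π) (x : B.Path) :
    B.permEquiv π hπ x = B.permToFun π hπ x := rfl

theorem permEquiv_congr {N : ℕ} {π ρ : Equiv.Perm (B.Pref N)} (h : π = ρ) (hπ : B.TvPres π)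
    (hρ : B.TvPres ρ) : B.permEquiv π hπ = B.permEquiv ρ hρ := by subst h; rfl

theorem permEquiv_mul {N : ℕ} (π ρ : Equiv.Perm (B.Pref N)) (hπ : B.TvPres π)
    (hρ : B.TvPres ρ) :
    B.permEquiv (π * ρ) (hπ.mul B hρ) = B.permEquiv π hπ * B.permEquiv ρ hρ :=
  Equiv.ext fun x => (B.permToFun_permToFun π ρ hπ hρ x).symm

theorem permEquiv_one {N : ℕ} (h : B.TvPres (N := N) 1) : B.permEquiv 1 h = 1 :=
  Equiv.ext fun x => B.permToFun_one h x

theorem permEquiv_inv {N : ℕ} (π : Equiv.Perm (B.Pref N)) (hπ : B.TvPres π) :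
    (B.permEquiv π hπ)⁻¹ = B.permEquiv π⁻¹ (hπ.inv B) :=
  Equiv.ext fun _ => rfl

theorem permEquiv_isLevel {N : ℕ} (π : Equiv.Perm (B.Pref N)) (hπ : B.TvPres π) :
    B.IsLevel N (B.permEquiv π hπ) := by
  constructor
  · intro x i hi
    exact B.permToFun_coord_ge π hπ x (not_lt.mpr hi)
  · intro x y hxy i hi
    rw [permEquiv_apply, permEquiv_apply, B.permToFun_coord_lt π hπ x hi,
      B.permToFun_coord_lt π hπ y hi, B.prefixOf_eq_of_agree hxy]

theorem permEquiv_mem_level {N : ℕ} (π : Equiv.Perm (B.Pref N)) (hπ : B.TvPres π) :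
    B.permEquiv π hπ ∈ B.level N :=
  ⟨B.permEquiv_isLevel π hπ, by
    rw [B.permEquiv_inv π hπ]; exact B.permEquiv_isLevel π⁻¹ (hπ.inv B)⟩

/-- The induced path permutation as an element of the full group. -/
noncomputable def psiFull {N : ℕ} (π : Equiv.Perm (B.Pref N)) (hπ : B.TvPres π) :
    ↥B.fullGroup :=
  ⟨B.permEquiv π hπ, ⟨N, B.permEquiv_mem_level π hπ⟩⟩

theorem psiFull_mul {N : ℕ} (π ρ : Equiv.Perm (B.Pref N)) (hπ : B.TvPres π)
    (hρ : B.TvPres ρ) :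
    B.psiFull (π * ρ) (hπ.mul B hρ) = B.psiFull π hπ * B.psiFull ρ hρ :=
  Subtype.ext (B.permEquiv_mul π ρ hπ hρ)

theorem psiFull_one {N : ℕ} (h : B.TvPres (N := N) 1) : B.psiFull 1 h = 1 :=
  Subtype.ext (B.permEquiv_one h)

theorem psiFull_inv {N : ℕ} (π : Equiv.Perm (B.Pref N)) (hπ : B.TvPres π) :
    B.psiFull π⁻¹ (hπ.inv B) = (B.psiFull π hπ)⁻¹ :=
  Subtype.ext (B.permEquiv_inv π hπ).symm

/-- The prefix permutation induced by a level-`N` element. -/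
noncomputable def piOf {N : ℕ} (g : Equiv.Perm B.Path) (hg : g ∈ B.level N) :
    Equiv.Perm (B.Pref N) where
  toFun := fun p => B.prefixOf N (g (B.pext p))
  invFun := fun p => B.prefixOf N (g⁻¹ (B.pext p))
  left_inv := fun p => by
    have h1 : ∀ i < N, (B.pext (B.prefixOf N (g (B.pext p)))).1 i = (g (B.pext p)).1 i :=
      fun i hi => B.pext_prefixOf_agree _ i hi
    have h2 : ∀ i < N, (g⁻¹ (B.pext (B.prefixOf N (g (B.pext p))))).1 i
        = (g⁻¹ (g (B.pext p))).1 i := (hg.2.2) _ _ h1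
    show B.prefixOf N (g⁻¹ (B.pext (B.prefixOf N (g (B.pext p))))) = p
    rw [B.prefixOf_eq_of_agree h2, Equiv.Perm.inv_eq_iff_eq.mpr (rfl : g (B.pext p) = g (B.pext p)), B.prefixOf_pext]
  right_inv := fun p => by
    have h1 : ∀ i < N, (B.pext (B.prefixOf N (g⁻¹ (B.pext p)))).1 i = (g⁻¹ (B.pext p)).1 i :=
      fun i hi => B.pext_prefixOf_agree _ i hi
    have h2 : ∀ i < N, (g (B.pext (B.prefixOf N (g⁻¹ (B.pext p))))).1 i
        = (g (g⁻¹ (B.pext p))).1 i := (hg.1.2) _ _ h1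
    show B.prefixOf N (g (B.pext (B.prefixOf N (g⁻¹ (B.pext p))))) = p
    rw [B.prefixOf_eq_of_agree h2, Equiv.Perm.eq_inv_iff_eq.mp (rfl : g⁻¹ (B.pext p) = g⁻¹ (B.pext p)), B.prefixOf_pext]

theorem tvPres_piOf {N : ℕ} (g : Equiv.Perm B.Path) (hg : g ∈ B.level N) :
    B.TvPres (B.piOf g hg) := by
  intro p
  show B.tv (B.prefixOf N (g (B.pext p))) = B.tv p
  rw [B.tv_prefixOf, hg.1.1 (B.pext p) N le_rfl]
  exact B.tv_pext p

theorem eq_permEquiv {N : ℕ} (g : Equiv.Perm B.Path) (hg : g ∈ B.level N) :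
    g = B.permEquiv (B.piOf g hg) (B.tvPres_piOf g hg) := by
  refine Equiv.ext fun x => Subtype.ext (funext fun i => ?_)
  by_cases hi : i < N
  · rw [permEquiv_apply, B.permToFun_coord_lt _ _ x hi]
    show (g x).1 i = (B.prefixOf N (g (B.pext (B.prefixOf N x)))).1 ⟨i, hi⟩
    have h1 : ∀ j < N, (B.pext (B.prefixOf N x)).1 j = x.1 j :=
      fun j hj => B.pext_prefixOf_agree x j hj
    have h2 : ∀ j < N, (g (B.pext (B.prefixOf N x))).1 j = (g x).1 j := (hg.1.2) _ _ h1
    exact (h2 i hi).symm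
  · rw [permEquiv_apply, B.permToFun_coord_ge _ _ x hi]
    exact hg.1.1 x i (le_of_not_gt hi)

theorem mem_Gcirc_iff (g : ↥B.fullGroup) (A : Set B.Path) :
    g ∈ B.Gcirc A ↔ ∀ x ∈ A, (g : Equiv.Perm B.Path) x = x := by
  simp only [Gcirc, Subgroup.mem_iInf, MulAction.mem_stabilizer_iff]
  rfl

theorem psiFull_mem_Gcirc {N : ℕ} (π : Equiv.Perm (B.Pref N)) (hπ : B.TvPres π)
    {A : Set B.Path} (hA : B.IsCylUnion N A)
    (hfix : ∀ p : B.Pref N, B.pext p ∈ A → π p = p) :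
    B.psiFull π hπ ∈ B.Gcirc A := by
  rw [B.mem_Gcirc_iff]
  intro x hx
  refine Subtype.ext (funext fun i => ?_)
  by_cases hi : i < N
  · rw [show ((B.psiFull π hπ : ↥B.fullGroup) : Equiv.Perm B.Path) x = B.permToFun π hπ x
      from rfl, B.permToFun_coord_lt π hπ x hi]
    have hmem : B.pext (B.prefixOf N x) ∈ A :=
      hA x hx _ (fun j hj => B.pext_prefixOf_agree x j hj)
    rw [hfix _ hmem]
    rfl
  · exact B.permToFun_coord_ge π hπ x hi

theorem piOf_fixes {N : ℕ} (g : ↥B.fullGroup) (hg : (g : Equiv.Perm B.Path) ∈ B.level N)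
    {A : Set B.Path} (hmem : g ∈ B.Gcirc A) (p : B.Pref N) (hp : B.pext p ∈ A) :
    B.piOf (g : Equiv.Perm B.Path) hg p = p := by
  show B.prefixOf N ((g : Equiv.Perm B.Path) (B.pext p)) = p
  rw [(B.mem_Gcirc_iff g A).mp hmem (B.pext p) hp, B.prefixOf_pext]

/-- A segment as an everywhere-defined edge sequence. -/
noncomputable def segAt {m L : ℕ} (f : B.Seg m L) : ∀ i, B.E i := fun i =>
  if h : m ≤ i ∧ i - m < L + 1 then
    cast (congrArg B.E (by omega : m + (i - m) = i)) (f.1 ⟨i - m, h.2⟩)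
  else Classical.choice (B.nonemptyE i)

theorem segAt_add {m L : ℕ} (f : B.Seg m L) (j : ℕ) (hj : j < L + 1) :
    B.segAt f (m + j) = f.1 ⟨j, hj⟩ := by
  have h : m ≤ m + j ∧ m + j - m < L + 1 := ⟨Nat.le_add_right _ _, by omega⟩
  have key : ∀ (j' : ℕ) (hj' : j' < L + 1) (hc : m + j' = m + j),
      cast (congrArg B.E hc) (f.1 ⟨j', hj'⟩) = f.1 ⟨j, hj⟩ := by
    intro j' hj' hc
    have : j' = j := by omega
    subst this
    rfl
  rw [segAt, dif_pos h]
  exact key (m + j - m) h.2 (by omega)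

/-- Splicing: given a path `z` avoiding `D` in its first `m` coordinates, and a segment from
the level-`m'` vertex of `z`, produce a prefix of length `m' + L + 1` with prescribed terminal
vertex, avoiding `D`. -/
theorem exists_avoid_pref {D : Set B.Path} (z : B.Path) (m : ℕ)
    (hz : ∀ y : B.Path, (∀ i < m, y.1 i = z.1 i) → y ∉ D)
    (m' L : ℕ) (hm : m ≤ m') (v : B.V (m' + L + 1))
    (hcon : 0 < B.numPaths m' L (B.src m' (z.1 m')) v) :
    ∃ p : B.Pref (m' + L + 1), B.tv p = v ∧ B.pext p ∉ D := by
  obtain ⟨⟨f, hsrc, hrng⟩⟩ := (Nat.card_pos_iff.mp hcon).1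
  obtain ⟨q, hq1, hq2⟩ : ∃ q : ∀ i, B.E i, (∀ i < m', q i = z.1 i) ∧
      (∀ (j : ℕ) (hj : j < L + 1), q (m' + j) = f.1 ⟨j, hj⟩) := by
    refine ⟨fun i => if h : i < m' then z.1 i else B.segAt f i, fun i hi => dif_pos hi, ?_⟩
    intro j hj
    dsimp only
    rw [dif_neg (by omega : ¬ m' + j < m')]
    exact B.segAt_add f j hj
  have hchain : B.PartialChain (m' + L + 1) q := by
    intro i hi
    rcases lt_trichotomy (i + 1) m' with h | h | h
    · rw [hq1 i (by omega), hq1 (i + 1) h]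
      exact z.2 i
    · have hgen : ∀ (k : ℕ), k = m' → B.src k (q k) = B.src k (z.1 k) := by
        intro k hk
        subst hk
        show B.src (k + 0) (q (k + 0)) = B.src (k + 0) (z.1 (k + 0))
        rw [hq2 0 (by omega)]
        exact hsrc
      rw [hq1 i (by omega), hgen (i + 1) h]
      exact z.2 i
    · obtain ⟨j, rfl⟩ : ∃ j, i = m' + j := ⟨i - m', by omega⟩
      show B.rng (m' + j) (q (m' + j)) = B.src (m' + (j + 1)) (q (m' + (j + 1)))
      rw [hq2 j (by omega), hq2 (j + 1) (by omega)]
      exact f.2 j (by omega)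
  set y := B.extPath (m' + L + 1) q hchain with hy
  refine ⟨B.prefixOf (m' + L + 1) y, ?_, ?_⟩
  · rw [B.tv_prefixOf]
    have h1 : B.src (m' + L + 1) (y.1 (m' + L + 1)) = B.rng (m' + L) (y.1 (m' + L)) :=
      (y.2 (m' + L)).symm
    rw [h1, B.extPath_lt (m' + L + 1) q hchain (by omega : m' + L < m' + L + 1),
      hq2 L (by omega)]
    exact hrng
  · apply hz
    intro i hi
    have him : i < m' + L + 1 := by omega
    rw [B.pext_prefixOf_agree y i him, B.extPath_lt (m' + L + 1) q hchain him,
      hq1 i (by omega)]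

end BratteliDiagram


section FinPermAux

variable {α β : Type*}

theorem swap_tvPres (tv : α → β) [DecidableEq α] {a b : α} (h : tv a = tv b) (x : α) :
    tv (Equiv.swap a b x) = tv x := by
  rcases eq_or_ne x a with rfl | hxa
  · rw [Equiv.swap_apply_left]; exact h.symm
  rcases eq_or_ne x b with rfl | hxb
  · rw [Equiv.swap_apply_right]; exact h
  · rw [Equiv.swap_apply_of_ne_of_ne hxa hxb]

theorem swap_fixes [DecidableEq α] {a b : α} {S : Set α} (ha : a ∉ S) (hb : b ∉ S) :
    ∀ s ∈ S, Equiv.swap a b s = s := fun s hs =>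
  Equiv.swap_apply_of_ne_of_ne (fun h => ha (h ▸ hs)) (fun h => hb (h ▸ hs))

theorem perm_decomp [Finite α] [DecidableEq α] (tv : α → β) (F : Set α)
    (π : Equiv.Perm α) (hπ : ∀ a, tv (π a) = tv a) (hF : ∀ a ∈ F, π a = a) :
    π ∈ Subgroup.closure {ρ : Equiv.Perm α |
      ∃ p q, p ≠ q ∧ tv p = tv q ∧ p ∉ F ∧ q ∉ F ∧ ρ = Equiv.swap p q} := by
  classical
  set gens := {ρ : Equiv.Perm α |
      ∃ p q, p ≠ q ∧ tv p = tv q ∧ p ∉ F ∧ q ∉ F ∧ ρ = Equiv.swap p q} with hgens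
  suffices H : ∀ (n : ℕ) (π : Equiv.Perm α), {a | π a ≠ a}.ncard ≤ n →
      (∀ a, tv (π a) = tv a) → (∀ a ∈ F, π a = a) → π ∈ Subgroup.closure gens by
    exact H {a | π a ≠ a}.ncard π le_rfl hπ hF
  intro n
  induction n with
  | zero =>
    intro π hcard _ _
    have : {a | π a ≠ a} = ∅ := by
      rw [← Set.ncard_eq_zero (Set.toFinite _)]
      omega
    have hid : ∀ a, π a = a := by
      intro a
      by_contra ha
      exact absurd (Set.eq_empty_iff_forall_notMem.mp this a) (fun h => h ha)
    have : π = 1 := Equiv.ext hid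
    rw [this]
    exact one_mem _
  | succ n IH =>
    intro π hcard hπ hF
    by_cases h1 : π = 1
    · rw [h1]; exact one_mem _
    obtain ⟨p, hp⟩ : ∃ p, π p ≠ p := by
      by_contra h
      push_neg at h
      exact h1 (Equiv.ext h)
    set τ := Equiv.swap p (π p) with hτ
    have hpF : p ∉ F := fun h => hp (hF p h)
    have hπpF : π p ∉ F := fun h => hp (π.injective (hF _ h))
    have hτmem : τ ∈ gens := ⟨p, π p, Ne.symm hp, (hπ p).symm, hpF, hπpF, rfl⟩
    have hsub : {a | (τ * π) a ≠ a} ⊆ {a | π a ≠ a} \ {p} := by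
      intro a ha
      simp only [Set.mem_setOf_eq, Equiv.Perm.mul_apply] at ha
      constructor
      · intro hπa
        apply ha
        rw [hπa]
        apply Equiv.swap_apply_of_ne_of_ne
        · intro h; exact hp (h ▸ hπa)
        · intro h
          rw [h] at hπa
          exact hp (π.injective hπa)
      · intro h
        rw [Set.mem_singleton_iff] at h
        subst h
        apply ha
        rw [hτ, Equiv.swap_apply_right]
    have hmemp : p ∈ {a | π a ≠ a} := hp
    have hcard' : {a | (τ * π) a ≠ a}.ncard ≤ n := by
      have h2 : ({a | π a ≠ a} \ {p}).ncard = {a | π a ≠ a}.ncard - 1 :=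
        Set.ncard_diff_singleton_of_mem hmemp
      have h3 := Set.ncard_le_ncard hsub (Set.toFinite _)
      have h4 : 0 < {a | π a ≠ a}.ncard :=
        (Set.ncard_pos (Set.toFinite _)).mpr ⟨p, hmemp⟩
      omega
    have hτπ : (∀ a, tv ((τ * π) a) = tv a) := fun a => by
      rw [Equiv.Perm.mul_apply, swap_tvPres tv (hπ p).symm, hπ]
    have hτπF : ∀ a ∈ F, (τ * π) a = a := fun a ha => by
      rw [Equiv.Perm.mul_apply, hF a ha]
      exact swap_fixes hpF hπpF a ha
    have hrec := IH (τ * π) hcard' hτπ hτπF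
    have : π = τ * (τ * π) := by
      rw [← mul_assoc, Equiv.swap_mul_self, one_mul]
    rw [this]
    exact mul_mem (Subgroup.subset_closure hτmem) hrec

theorem swap_mem_closure_pair [DecidableEq α] (tv : α → β) (SA SC : Set α)
    (hr : ∀ a : α, ∃ r, tv r = tv a ∧ r ∉ SA ∧ r ∉ SC)
    {p q : α} (hpq : p ≠ q) (htv : tv p = tv q)
    (hp : p ∉ SA ∩ SC) (hq : q ∉ SA ∩ SC) :
    Equiv.swap p q ∈ Subgroup.closure
      ({ρ : Equiv.Perm α | (∀ a, tv (ρ a) = tv a) ∧ ∀ a ∈ SA, ρ a = a} ∪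
       {ρ : Equiv.Perm α | (∀ a, tv (ρ a) = tv a) ∧ ∀ a ∈ SC, ρ a = a}) := by
  set KA := {ρ : Equiv.Perm α | (∀ a, tv (ρ a) = tv a) ∧ ∀ a ∈ SA, ρ a = a} with hKA
  set KC := {ρ : Equiv.Perm α | (∀ a, tv (ρ a) = tv a) ∧ ∀ a ∈ SC, ρ a = a} with hKC
  have hswapA : ∀ (a b : α), tv a = tv b → a ∉ SA → b ∉ SA → Equiv.swap a b ∈ KA :=
    fun a b h ha hb => ⟨swap_tvPres tv h, swap_fixes ha hb⟩
  have hswapC : ∀ (a b : α), tv a = tv b → a ∉ SC → b ∉ SC → Equiv.swap a b ∈ KC :=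
    fun a b h ha hb => ⟨swap_tvPres tv h, swap_fixes ha hb⟩
  have mixed : ∀ (a b : α), a ≠ b → tv a = tv b → a ∉ SA → b ∉ SC →
      Equiv.swap a b ∈ Subgroup.closure (KA ∪ KC) := by
    intro a b hab htab haA hbC
    obtain ⟨r, hrtv, hrA, hrC⟩ := hr a
    rcases eq_or_ne r a with h | hra
    · exact Subgroup.subset_closure (Or.inr (hswapC a b htab (h ▸ hrC) hbC))
    rcases eq_or_ne r b with h | hrb
    · exact Subgroup.subset_closure (Or.inl (hswapA a b htab haA (h ▸ hrA)))
    · have key : Equiv.swap r a * Equiv.swap b r * Equiv.swap r a = Equiv.swap a b :=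
        Equiv.swap_mul_swap_mul_swap (Ne.symm hrb) (Ne.symm hab)
      rw [← key]
      have h1 : Equiv.swap r a ∈ KA := hswapA r a hrtv hrA haA
      have h2 : Equiv.swap b r ∈ KC := hswapC b r (htab.symm.trans hrtv.symm) hbC hrC
      exact mul_mem (mul_mem (Subgroup.subset_closure (Or.inl h1))
        (Subgroup.subset_closure (Or.inr h2))) (Subgroup.subset_closure (Or.inl h1))
  rw [Set.mem_inter_iff, not_and_or] at hp hq
  rcases hp with hpA | hpC
  · rcases hq with hqA | hqC
    · exact Subgroup.subset_closure (Or.inl (hswapA p q htv hpA hqA))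
    · exact mixed p q hpq htv hpA hqC
  · rcases hq with hqA | hqC
    · rw [Equiv.swap_comm]
      exact mixed q p (Ne.symm hpq) htv.symm hqA hpC
    · exact Subgroup.subset_closure (Or.inr (hswapC p q htv hpC hqC))

theorem perm_mem_closure_pair [Finite α] (tv : α → β) (SA SC : Set α)
    (hr : ∀ a : α, ∃ r, tv r = tv a ∧ r ∉ SA ∧ r ∉ SC)
    (π : Equiv.Perm α) (hπ : ∀ a, tv (π a) = tv a)
    (hF : ∀ a ∈ SA ∩ SC, π a = a) :
    π ∈ Subgroup.closure
      ({ρ : Equiv.Perm α | (∀ a, tv (ρ a) = tv a) ∧ ∀ a ∈ SA, ρ a = a} ∪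
       {ρ : Equiv.Perm α | (∀ a, tv (ρ a) = tv a) ∧ ∀ a ∈ SC, ρ a = a}) := by
  classical
  have h1 := perm_decomp tv (SA ∩ SC) π hπ hF
  refine (Subgroup.closure_le _).mpr ?_ h1
  rintro ρ ⟨p, q, hpq, htv, hp, hq, rfl⟩
  exact swap_mem_closure_pair tv SA SC hr hpq htv hp hq

end FinPermAux

/-- for clopen sets `A, C` with `A ∪ C ≠ X`, the group `G°(A ∩ C)` is generated
by `G°(A)` and `G°(C)`. -/
theorem Gcirc_inter_eq_sup (B : BratteliDiagram) (hsimple : B.IsSimple)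
    (A C : Set B.Path) (hA : IsClopen A) (hC : IsClopen C)
    (hU : A ∪ C ≠ Set.univ) :
    B.Gcirc (A ∩ C) = B.Gcirc A ⊔ B.Gcirc C := by
  apply le_antisymm
  · -- hard direction
    intro g hg
    obtain ⟨n, hgn⟩ := g.2
    obtain ⟨nA, hA'⟩ := B.clopen_isCylUnion hA
    obtain ⟨nC, hC'⟩ := B.clopen_isCylUnion hC
    obtain ⟨z, hz⟩ : ((A ∪ C)ᶜ).Nonempty := Set.nonempty_compl.mpr hU
    have hop : IsOpen (A ∪ C)ᶜ := (hA.1.union hC.1).isOpen_compl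
    obtain ⟨m, hm⟩ := B.exists_cyl_subset hop hz
    obtain ⟨m', hn', hm'', hnA', hnC'⟩ : ∃ m', n ≤ m' ∧ m ≤ m' ∧ nA ≤ m' ∧ nC ≤ m' :=
      ⟨max (max n m) (max nA nC), by omega, by omega, by omega, by omega⟩
    obtain ⟨L, hL⟩ := hsimple m'
    have hgN : (g : Equiv.Perm B.Path) ∈ B.level (m' + L + 1) :=
      B.level_mono (by omega) hgn
    set SA : Set (B.Pref (m' + L + 1)) := {p | B.pext p ∈ A} with hSA
    set SC : Set (B.Pref (m' + L + 1)) := {p | B.pext p ∈ C} with hSC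
    have hr : ∀ p0 : B.Pref (m' + L + 1), ∃ r : B.Pref (m' + L + 1),
        B.tv r = B.tv p0 ∧ r ∉ SA ∧ r ∉ SC := by
      intro p0
      have hz' : ∀ y : B.Path, (∀ i < m, y.1 i = z.1 i) → y ∉ A ∪ C :=
        fun y hy => hm hy
      obtain ⟨r, hrtv, hrD⟩ := B.exists_avoid_pref z m hz' m' L hm''
        (B.tv p0) (hL (B.src m' (z.1 m')) (B.tv p0))
      exact ⟨r, hrtv, fun h => hrD (Or.inl h), fun h => hrD (Or.inr h)⟩
    have hπtv := B.tvPres_piOf (g : Equiv.Perm B.Path) hgN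
    have hfix : ∀ p ∈ SA ∩ SC, (B.piOf (g : Equiv.Perm B.Path) hgN) p = p := by
      intro p hp
      exact B.piOf_fixes g hgN hg p ⟨hp.1, hp.2⟩
    have hcl := perm_mem_closure_pair B.tv SA SC hr
      (B.piOf (g : Equiv.Perm B.Path) hgN) hπtv hfix
    have main : ∀ ρ ∈ Subgroup.closure
        ({σ : Equiv.Perm (B.Pref (m' + L + 1)) |
            (∀ a, B.tv (σ a) = B.tv a) ∧ ∀ a ∈ SA, σ a = a} ∪
         {σ : Equiv.Perm (B.Pref (m' + L + 1)) |
            (∀ a, B.tv (σ a) = B.tv a) ∧ ∀ a ∈ SC, σ a = a}),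
        ∃ h : B.TvPres ρ, B.psiFull ρ h ∈ B.Gcirc A ⊔ B.Gcirc C := by
      intro ρ hρ
      refine Subgroup.closure_induction ?_ ?_ ?_ ?_ hρ
      · rintro σ (⟨htv, hfixA⟩ | ⟨htv, hfixC⟩)
        · refine ⟨htv, SetLike.le_def.mp le_sup_left ?_⟩
          exact B.psiFull_mem_Gcirc σ htv (hA'.mono B (by omega : nA ≤ m' + L + 1))
            (fun p hp => hfixA p hp)
        · refine ⟨htv, SetLike.le_def.mp le_sup_right ?_⟩
          exact B.psiFull_mem_Gcirc σ htv (hC'.mono B (by omega : nC ≤ m' + L + 1))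
            (fun p hp => hfixC p hp)
      · exact ⟨BratteliDiagram.TvPres.one B, by rw [B.psiFull_one]; exact one_mem _⟩
      · rintro x y hx hy ⟨h1, m1⟩ ⟨h2, m2⟩
        exact ⟨h1.mul B h2, by rw [B.psiFull_mul x y h1 h2]; exact mul_mem m1 m2⟩
      · rintro x hx ⟨h1, m1⟩
        exact ⟨h1.inv B, by rw [B.psiFull_inv x h1]; exact inv_mem m1⟩
    obtain ⟨hπ2, hmem⟩ := main _ hcl
    have hgeq : g = B.psiFull (B.piOf (g : Equiv.Perm B.Path) hgN) hπ2 :=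
      Subtype.ext (B.eq_permEquiv (g : Equiv.Perm B.Path) hgN)
    rw [hgeq]
    exact hmem
  · -- easy direction
    apply sup_le
    · intro g hg
      rw [B.mem_Gcirc_iff] at hg ⊢
      exact fun x hx => hg x hx.1
    · intro g hg
      rw [B.mem_Gcirc_iff] at hg ⊢
      exact fun x hx => hg x hx.2
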